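/- Let V, W, X and V₁, W₁, X₁ and V₂, W₂, X₂ be arbitrary 2×2 unitary complex matrices, and let T = S₀⊗I₂ + S₃⊗σ₁ denote the CNOT gate. Then the 8×8 unitary matrix M₁ = (V₁⊗W₁⊗X₁)·(T⊗I₂)·(V⊗W⊗X)·(I₂⊗T)·(V₂⊗W₂⊗X₂) has Schmidt rank 1, 2, or 4. -/

import Mathlib

open Matrix Kronecker Complex

/-- The tripartite Schmidt rank of an 8×8 complex matrix, viewed as a matrix on
ℂ² ⊗ ℂ² ⊗ ℂ² via Kronecker products: the least `r` such that
`U = ∑ j, A j ⊗ₖ (B j ⊗ₖ C j)` with 2×2 matrices `A j`, `B j`, `C j`. -/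
noncomputable def sr (U : Matrix (Fin 2 × Fin 2 × Fin 2) (Fin 2 × Fin 2 × Fin 2) ℂ) : ℕ :=
  sInf {r | ∃ A B C : Fin r → Matrix (Fin 2) (Fin 2) ℂ,
    U = ∑ j, A j ⊗ₖ (B j ⊗ₖ C j)}

def S0 : Matrix (Fin 2) (Fin 2) ℂ := !![1, 0; 0, 0]
def S1 : Matrix (Fin 2) (Fin 2) ℂ := !![0, 1; 0, 0]
def S2 : Matrix (Fin 2) (Fin 2) ℂ := !![0, 0; 1, 0]
def S3 : Matrix (Fin 2) (Fin 2) ℂ := !![0, 0; 0, 1]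
def σ1 : Matrix (Fin 2) (Fin 2) ℂ := !![0, 1; 1, 0]
def σ2 : Matrix (Fin 2) (Fin 2) ℂ := !![0, -I; I, 0]
def σ3 : Matrix (Fin 2) (Fin 2) ℂ := !![1, 0; 0, -1]
def I2 : Matrix (Fin 2) (Fin 2) ℂ := 1

/-- Reassociation `((ℂ²⊗ℂ²)⊗ℂ²) ≃ (ℂ²⊗(ℂ²⊗ℂ²))` at the level of matrix indices. -/
def matAssoc (M : Matrix ((Fin 2 × Fin 2) × Fin 2) ((Fin 2 × Fin 2) × Fin 2) ℂ) :
    Matrix (Fin 2 × Fin 2 × Fin 2) (Fin 2 × Fin 2 × Fin 2) ℂ :=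
  Matrix.reindex (Equiv.prodAssoc (Fin 2) (Fin 2) (Fin 2))
    (Equiv.prodAssoc (Fin 2) (Fin 2) (Fin 2)) M

/-- The CNOT gate as a 4×4 matrix. -/
def Tcnot : Matrix (Fin 2 × Fin 2) (Fin 2 × Fin 2) ℂ := S0 ⊗ₖ I2 + S3 ⊗ₖ σ1

/-! ### Auxiliary definitions and lemmas -/

abbrev M2' := Matrix (Fin 2) (Fin 2) ℂ
abbrev M8' := Matrix (Fin 2 × Fin 2 × Fin 2) (Fin 2 × Fin 2 × Fin 2) ℂ

/-! #### Generic linear-algebra infrastructure for Schmidt rank lower bounds -/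

lemma card_le_of_mul_eq_one' {κ : Type*} [Fintype κ] [DecidableEq κ] {n : ℕ}
    (P : Matrix κ (Fin n) ℂ) (Q : Matrix (Fin n) κ ℂ) (h : P * Q = 1) :
    Fintype.card κ ≤ n := by
  have hinj : Function.Injective Q.mulVecLin := by
    intro x y hxy
    have : P *ᵥ (Q *ᵥ x) = P *ᵥ (Q *ᵥ y) := by simpa [Matrix.mulVecLin] using congrArg (P *ᵥ ·) hxy
    simpa [Matrix.mulVec_mulVec, h] using this
  have := LinearMap.finrank_le_finrank_of_injective hinj
  simpa [Module.finrank_fintype_fun_eq_card] using this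

noncomputable def Lmap {κ κ' : Type*} [Fintype κ] [Fintype κ']
    (rB : κ → M2') (fA fC : κ' → M2') (U : M8') : Matrix κ κ' ℂ :=
  fun p q => ∑ i : Fin 2 × Fin 2 × Fin 2, ∑ j : Fin 2 × Fin 2 × Fin 2,
    rB p i.2.1 j.2.1 * (fA q i.1 j.1 * fC q i.2.2 j.2.2) * U i j

lemma Lmap_pure {κ κ' : Type*} [Fintype κ] [Fintype κ']
    (rB : κ → M2') (fA fC : κ' → M2') (A B C : M2') (p : κ) (q : κ') :
    Lmap rB fA fC (A ⊗ₖ (B ⊗ₖ C)) p q =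
      (∑ i : Fin 2, ∑ j : Fin 2, rB p i j * B i j) *
      ((∑ i : Fin 2, ∑ j : Fin 2, fA q i j * A i j) *
       (∑ i : Fin 2, ∑ j : Fin 2, fC q i j * C i j)) := by
  simp only [Lmap, kroneckerMap_apply, Fintype.sum_prod_type, Fin.sum_univ_two]
  ring

lemma Lmap_add {κ κ' : Type*} [Fintype κ] [Fintype κ']
    (rB : κ → M2') (fA fC : κ' → M2') (U V : M8') :
    Lmap rB fA fC (U + V) = Lmap rB fA fC U + Lmap rB fA fC V := by
  ext p q
  simp [Lmap, mul_add, Finset.sum_add_distrib]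

lemma Lmap_sum {κ κ' : Type*} [Fintype κ] [Fintype κ'] {n : ℕ}
    (rB : κ → M2') (fA fC : κ' → M2') (U : Fin n → M8') :
    Lmap rB fA fC (∑ j, U j) = ∑ j, Lmap rB fA fC (U j) := by
  induction n with
  | zero => ext p q; simp [Lmap]
  | succ m ih =>
      rw [Fin.sum_univ_castSucc (f := U), Fin.sum_univ_castSucc (f := fun j => Lmap rB fA fC (U j)),
        Lmap_add, ih]

lemma le_of_Lmap_eq_one {κ : Type*} [Fintype κ] [DecidableEq κ] {n : ℕ}
    (rB fA fC : κ → M2') (A B C : Fin n → M2')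
    (h : Lmap rB fA fC (∑ j, A j ⊗ₖ (B j ⊗ₖ C j)) = 1) : Fintype.card κ ≤ n := by
  set P : Matrix κ (Fin n) ℂ := fun p j => ∑ i : Fin 2, ∑ l : Fin 2, rB p i l * B j i l with hP
  set Q : Matrix (Fin n) κ ℂ := fun j q =>
    (∑ i : Fin 2, ∑ l : Fin 2, fA q i l * A j i l) *
    (∑ i : Fin 2, ∑ l : Fin 2, fC q i l * C j i l) with hQ
  apply card_le_of_mul_eq_one' P Q
  ext p q
  rw [← h, Lmap_sum]
  rw [Matrix.mul_apply]
  rw [show (∑ j, Lmap rB fA fC (A j ⊗ₖ (B j ⊗ₖ C j))) p q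
      = ∑ j, Lmap rB fA fC (A j ⊗ₖ (B j ⊗ₖ C j)) p q by
    simp [Matrix.sum_apply]]
  refine Finset.sum_congr rfl fun j _ => ?_
  rw [hP, hQ]
  exact (Lmap_pure rB fA fC (A j) (B j) (C j) p q).symm

/-! #### Unitarity lemmas -/

lemma conjT_kron {m n : Type*} [Fintype m] [Fintype n] (A : Matrix m m ℂ) (B : Matrix n n ℂ) :
    (A ⊗ₖ B)ᴴ = Aᴴ ⊗ₖ Bᴴ := by
  ext ⟨i1, i2⟩ ⟨j1, j2⟩
  simp [Matrix.conjTranspose_apply, Matrix.kroneckerMap_apply, star_mul']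

lemma kron_unitary {m n : Type*} [Fintype m] [DecidableEq m] [Fintype n] [DecidableEq n]
    (A : Matrix m m ℂ) (B : Matrix n n ℂ)
    (hA : A ∈ Matrix.unitaryGroup m ℂ) (hB : B ∈ Matrix.unitaryGroup n ℂ) :
    A ⊗ₖ B ∈ Matrix.unitaryGroup (m × n) ℂ := by
  rw [Matrix.mem_unitaryGroup_iff'] at hA hB ⊢
  rw [Matrix.star_eq_conjTranspose] at hA hB ⊢
  rw [conjT_kron, ← Matrix.mul_kronecker_mul, hA, hB, Matrix.one_kronecker_one]

lemma Tcnot_unitary : Tcnot ∈ Matrix.unitaryGroup (Fin 2 × Fin 2) ℂ := by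
  rw [Matrix.mem_unitaryGroup_iff', Matrix.star_eq_conjTranspose]
  ext ⟨i1, i2⟩ ⟨j1, j2⟩
  fin_cases i1 <;> fin_cases i2 <;> fin_cases j1 <;> fin_cases j2 <;>
    simp [Tcnot, Matrix.mul_apply, Fintype.sum_prod_type, Fin.sum_univ_two, S0, S3, σ1, I2,
      Matrix.one_apply, Matrix.conjTranspose_apply, Prod.ext_iff]

lemma matAssoc_unitary (M : Matrix ((Fin 2 × Fin 2) × Fin 2) ((Fin 2 × Fin 2) × Fin 2) ℂ)
    (hM : M ∈ Matrix.unitaryGroup ((Fin 2 × Fin 2) × Fin 2) ℂ) :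
    matAssoc M ∈ Matrix.unitaryGroup (Fin 2 × Fin 2 × Fin 2) ℂ := by
  rw [Matrix.mem_unitaryGroup_iff', Matrix.star_eq_conjTranspose] at hM ⊢
  rw [matAssoc, Matrix.reindex_apply, Matrix.conjTranspose_submatrix,
    Matrix.submatrix_mul_equiv, hM, Matrix.submatrix_one_equiv]

/-! #### The canonical four-term expansion of `M₁` -/

def pw : Fin 2 → M2' := ![1, σ1]
def sbM : Fin 2 → M2' := ![S0, S3]
noncomputable def Amat (V₁ V V₂ : M2') (a : Fin 2) : M2' := V₁ * sbM a * V * 1 * V₂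
noncomputable def Bmat (W₁ W W₂ : M2') (a b : Fin 2) : M2' := W₁ * pw a * W * sbM b * W₂
noncomputable def Cmat (X₁ X X₂ : M2') (b : Fin 2) : M2' := X₁ * 1 * X * pw b * X₂

lemma kron5 (a1 a2 a3 a4 a5 b1 b2 b3 b4 b5 c1 c2 c3 c4 c5 : M2') :
    (a1 ⊗ₖ (b1 ⊗ₖ c1)) * (a2 ⊗ₖ (b2 ⊗ₖ c2)) * (a3 ⊗ₖ (b3 ⊗ₖ c3)) * (a4 ⊗ₖ (b4 ⊗ₖ c4)) *
      (a5 ⊗ₖ (b5 ⊗ₖ c5)) =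
    (a1 * a2 * a3 * a4 * a5) ⊗ₖ ((b1 * b2 * b3 * b4 * b5) ⊗ₖ (c1 * c2 * c3 * c4 * c5)) := by
  simp only [← Matrix.mul_kronecker_mul]

lemma expandM (V W X V₁ W₁ X₁ V₂ W₂ X₂ : M2')
    (M₁ : M8')
    (hM₁ : M₁ = (V₁ ⊗ₖ (W₁ ⊗ₖ X₁)) * matAssoc (Tcnot ⊗ₖ I2) * (V ⊗ₖ (W ⊗ₖ X)) *
      (I2 ⊗ₖ Tcnot) * (V₂ ⊗ₖ (W₂ ⊗ₖ X₂))) :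
    M₁ = Amat V₁ V V₂ 0 ⊗ₖ (Bmat W₁ W W₂ 0 0 ⊗ₖ Cmat X₁ X X₂ 0)
       + Amat V₁ V V₂ 0 ⊗ₖ (Bmat W₁ W W₂ 0 1 ⊗ₖ Cmat X₁ X X₂ 1)
       + Amat V₁ V V₂ 1 ⊗ₖ (Bmat W₁ W W₂ 1 0 ⊗ₖ Cmat X₁ X X₂ 0)
       + Amat V₁ V V₂ 1 ⊗ₖ (Bmat W₁ W W₂ 1 1 ⊗ₖ Cmat X₁ X X₂ 1) := by
  have h1 : matAssoc (Tcnot ⊗ₖ I2) =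
      S0 ⊗ₖ ((1 : M2') ⊗ₖ (1 : M2')) + S3 ⊗ₖ (σ1 ⊗ₖ (1 : M2')) := by
    simp [matAssoc, Tcnot, I2, Matrix.add_kronecker, Matrix.submatrix_add, Matrix.kronecker_assoc]
  have h2 : I2 ⊗ₖ Tcnot = (1 : M2') ⊗ₖ (S0 ⊗ₖ (1 : M2')) + (1 : M2') ⊗ₖ (S3 ⊗ₖ σ1) := by
    simp [Tcnot, I2, Matrix.kronecker_add]
  rw [hM₁, h1, h2]
  simp only [mul_add, add_mul]
  simp only [kron5]
  simp only [Amat, Bmat, Cmat, pw, sbM, Matrix.cons_val_zero, Matrix.cons_val_one,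
    Matrix.head_cons, Matrix.mul_one, Matrix.one_mul]
  abel

/-! #### Dual functionals -/

lemma cancel_left' {A B X : M2'} (h : A * B = 1) : A * (B * X) = X := by
  rw [← Matrix.mul_assoc, h, Matrix.one_mul]

noncomputable def dualA (V₁ V V₂ : M2') (a : Fin 2) : M2' :=
  Matrix.of fun i j => V₁ᴴ a i * (V * V₂)ᴴ j a

noncomputable def dualC (X₁ X X₂ : M2') (b : Fin 2) : M2' :=
  Matrix.of fun i j => (X₂ᴴ * pw b * (X₁ * X)ᴴ) j i / 2

noncomputable def dualB2 (W₁ W W₂ : M2') (b : Fin 2) : M2' :=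
  Matrix.of fun i j => (W₁ * W)ᴴ b i * W₂ᴴ j b

noncomputable def Wd (W : M2') (b : Fin 2) : ℂ := W 0 b ^ 2 - W 1 b ^ 2

noncomputable def alf (W : M2') (a' b' k : Fin 2) : ℂ :=
  (if a' = k then W 0 b' else -W 1 b') / Wd W b'

noncomputable def dualB4 (W₁ W W₂ : M2') (p : Fin 2 × Fin 2) : M2' :=
  Matrix.of fun i j =>
    (alf W p.1 p.2 0 * W₁ᴴ 0 i + alf W p.1 p.2 1 * W₁ᴴ 1 i) * W₂ᴴ j p.2

section dualEval
variable (V₁ V V₂ W₁ W W₂ X₁ X X₂ : M2')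

lemma evalA (hV : V ∈ Matrix.unitaryGroup (Fin 2) ℂ)
    (hV₁ : V₁ ∈ Matrix.unitaryGroup (Fin 2) ℂ) (hV₂ : V₂ ∈ Matrix.unitaryGroup (Fin 2) ℂ)
    (a a' : Fin 2) :
    ∑ i : Fin 2, ∑ j : Fin 2, dualA V₁ V V₂ a i j * Amat V₁ V V₂ a' i j =
      if a = a' then 1 else 0 := by
  have h1 : V₁ᴴ * V₁ = 1 := by
    simpa [Matrix.star_eq_conjTranspose] using (Matrix.mem_unitaryGroup_iff'.mp hV₁)
  have h2 : V * Vᴴ = 1 := by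
    simpa [Matrix.star_eq_conjTranspose] using (Matrix.mem_unitaryGroup_iff.mp hV)
  have h3 : V₂ * V₂ᴴ = 1 := by
    simpa [Matrix.star_eq_conjTranspose] using (Matrix.mem_unitaryGroup_iff.mp hV₂)
  have key : V₁ᴴ * Amat V₁ V V₂ a' * (V * V₂)ᴴ = sbM a' := by
    rw [Amat, Matrix.conjTranspose_mul, Matrix.mul_one]
    calc V₁ᴴ * (V₁ * sbM a' * V * V₂) * (V₂ᴴ * Vᴴ)
        = V₁ᴴ * (V₁ * (sbM a' * (V * (V₂ * (V₂ᴴ * Vᴴ))))) := by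
          simp only [Matrix.mul_assoc]
      _ = sbM a' := by
          rw [cancel_left' h1, cancel_left' h3, h2, Matrix.mul_one]
  have expand : ∑ i : Fin 2, ∑ j : Fin 2, dualA V₁ V V₂ a i j * Amat V₁ V V₂ a' i j =
      (V₁ᴴ * Amat V₁ V V₂ a' * (V * V₂)ᴴ) a a := by
    simp [dualA, Matrix.mul_apply, Fin.sum_univ_two]
    ring
  rw [expand, key]
  fin_cases a <;> fin_cases a' <;> simp [sbM, S0, S3]

lemma evalC (hX : X ∈ Matrix.unitaryGroup (Fin 2) ℂ)
    (hX₁ : X₁ ∈ Matrix.unitaryGroup (Fin 2) ℂ) (hX₂ : X₂ ∈ Matrix.unitaryGroup (Fin 2) ℂ)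
    (b b' : Fin 2) :
    ∑ i : Fin 2, ∑ j : Fin 2, dualC X₁ X X₂ b i j * Cmat X₁ X X₂ b' i j =
      if b = b' then 1 else 0 := by
  have h1 : (X₁ * X)ᴴ * (X₁ * X) = 1 := by
    have := Matrix.mem_unitaryGroup_iff'.mp (mul_mem hX₁ hX)
    simpa [Matrix.star_eq_conjTranspose] using this
  have h2 : X₂ * X₂ᴴ = 1 := by
    simpa [Matrix.star_eq_conjTranspose] using (Matrix.mem_unitaryGroup_iff.mp hX₂)
  have key : X₂ᴴ * pw b * (X₁ * X)ᴴ * Cmat X₁ X X₂ b' =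
      X₂ᴴ * (pw b * (pw b' * X₂)) := by
    have hC : Cmat X₁ X X₂ b' = (X₁ * X) * (pw b' * X₂) := by
      rw [Cmat]; simp only [Matrix.mul_one, Matrix.mul_assoc]
    rw [hC]
    calc X₂ᴴ * pw b * (X₁ * X)ᴴ * ((X₁ * X) * (pw b' * X₂))
        = X₂ᴴ * (pw b * ((X₁ * X)ᴴ * ((X₁ * X) * (pw b' * X₂)))) := by
          simp only [Matrix.mul_assoc]
      _ = X₂ᴴ * (pw b * (pw b' * X₂)) := by rw [cancel_left' h1]
  have expand : ∑ i : Fin 2, ∑ j : Fin 2, dualC X₁ X X₂ b i j * Cmat X₁ X X₂ b' i j =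
      Matrix.trace (X₂ᴴ * pw b * (X₁ * X)ᴴ * Cmat X₁ X X₂ b') / 2 := by
    simp [dualC, Matrix.trace, Matrix.diag, Matrix.mul_apply, Fin.sum_univ_two]
    ring
  rw [expand, key]
  have htr : Matrix.trace (X₂ᴴ * (pw b * (pw b' * X₂))) = Matrix.trace (pw b * pw b') := by
    rw [Matrix.trace_mul_comm]
    congr 1
    calc pw b * (pw b' * X₂) * X₂ᴴ = pw b * pw b' * (X₂ * X₂ᴴ) := by
          simp only [Matrix.mul_assoc]
      _ = pw b * pw b' := by rw [h2, Matrix.mul_one]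
  rw [htr]
  fin_cases b <;> fin_cases b' <;>
    simp [pw, σ1, Matrix.trace_fin_two, Matrix.mul_apply, Fin.sum_univ_two] <;> norm_num

lemma evalB2 (hW₁ : W₁ ∈ Matrix.unitaryGroup (Fin 2) ℂ)
    (hW : W ∈ Matrix.unitaryGroup (Fin 2) ℂ) (hW₂ : W₂ ∈ Matrix.unitaryGroup (Fin 2) ℂ)
    (b b' : Fin 2) :
    ∑ i : Fin 2, ∑ j : Fin 2, dualB2 W₁ W W₂ b i j * Bmat W₁ W W₂ 0 b' i j =
      if b = b' then 1 else 0 := by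
  have h1 : (W₁ * W)ᴴ * (W₁ * W) = 1 := by
    have := Matrix.mem_unitaryGroup_iff'.mp (mul_mem hW₁ hW)
    simpa [Matrix.star_eq_conjTranspose] using this
  have h2 : W₂ * W₂ᴴ = 1 := by
    simpa [Matrix.star_eq_conjTranspose] using (Matrix.mem_unitaryGroup_iff.mp hW₂)
  have key : (W₁ * W)ᴴ * Bmat W₁ W W₂ 0 b' * W₂ᴴ = sbM b' := by
    have hB : Bmat W₁ W W₂ 0 b' = (W₁ * W) * (sbM b' * W₂) := by
      rw [Bmat]; show W₁ * 1 * W * sbM b' * W₂ = _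
      rw [Matrix.mul_one]; simp only [Matrix.mul_assoc]
    rw [hB]
    calc (W₁ * W)ᴴ * ((W₁ * W) * (sbM b' * W₂)) * W₂ᴴ
        = sbM b' * (W₂ * W₂ᴴ) := by rw [cancel_left' h1]; simp only [Matrix.mul_assoc]
      _ = sbM b' := by rw [h2, Matrix.mul_one]
  have expand : ∑ i : Fin 2, ∑ j : Fin 2, dualB2 W₁ W W₂ b i j * Bmat W₁ W W₂ 0 b' i j =
      ((W₁ * W)ᴴ * Bmat W₁ W W₂ 0 b' * W₂ᴴ) b b := by
    simp [dualB2, Matrix.mul_apply, Fin.sum_univ_two]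
    ring
  rw [expand, key]
  fin_cases b <;> fin_cases b' <;> simp [sbM, S0, S3]

lemma evalB4 (hW₁ : W₁ ∈ Matrix.unitaryGroup (Fin 2) ℂ)
    (hW₂ : W₂ ∈ Matrix.unitaryGroup (Fin 2) ℂ)
    (hd0 : Wd W 0 ≠ 0) (hd1 : Wd W 1 ≠ 0) (p : Fin 2 × Fin 2) (a b : Fin 2) :
    ∑ i : Fin 2, ∑ j : Fin 2, dualB4 W₁ W W₂ p i j * Bmat W₁ W W₂ a b i j =
      if p = (a, b) then 1 else 0 := by
  have h1 : W₁ᴴ * W₁ = 1 := by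
    simpa [Matrix.star_eq_conjTranspose] using (Matrix.mem_unitaryGroup_iff'.mp hW₁)
  have h2 : W₂ * W₂ᴴ = 1 := by
    simpa [Matrix.star_eq_conjTranspose] using (Matrix.mem_unitaryGroup_iff.mp hW₂)
  have key : W₁ᴴ * Bmat W₁ W W₂ a b * W₂ᴴ = pw a * (W * sbM b) := by
    rw [Bmat]
    calc W₁ᴴ * (W₁ * pw a * W * sbM b * W₂) * W₂ᴴ
        = W₁ᴴ * (W₁ * (pw a * (W * (sbM b * (W₂ * W₂ᴴ))))) := by simp only [Matrix.mul_assoc]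
      _ = pw a * (W * (sbM b * 1)) := by rw [cancel_left' h1, h2]
      _ = pw a * (W * sbM b) := by rw [Matrix.mul_one]
  have expand : ∑ i : Fin 2, ∑ j : Fin 2, dualB4 W₁ W W₂ p i j * Bmat W₁ W W₂ a b i j =
      alf W p.1 p.2 0 * ((W₁ᴴ * Bmat W₁ W W₂ a b * W₂ᴴ) 0 p.2) +
      alf W p.1 p.2 1 * ((W₁ᴴ * Bmat W₁ W W₂ a b * W₂ᴴ) 1 p.2) := by
    simp [dualB4, Matrix.mul_apply, Fin.sum_univ_two]
    ring
  rw [expand, key]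
  obtain ⟨p1, p2⟩ := p
  fin_cases p1 <;> fin_cases p2 <;> fin_cases a <;> fin_cases b <;>
    · simp only [alf, pw, sbM, Matrix.cons_val_zero, Matrix.cons_val_one, Matrix.head_cons,
        Matrix.mul_apply, Fin.sum_univ_two, S0, S3, σ1]
      norm_num [Prod.ext_iff]
      try field_simp
      try (simp only [Wd]; ring)
      try (simp only [Wd] at hd0 hd1 ⊢; field_simp; try ring)
      try ring

end dualEval

/-! #### 2×2 unitary matrix facts -/

section unitaryFacts
variable (W₁ W W₂ : M2')

lemma det_ne_zero' (hW : W ∈ Matrix.unitaryGroup (Fin 2) ℂ) : W.det ≠ 0 := by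
  have h : W * Wᴴ = 1 := by
    simpa [Matrix.star_eq_conjTranspose] using (Matrix.mem_unitaryGroup_iff.mp hW)
  intro h0
  have := congrArg Matrix.det h
  rw [Matrix.det_mul, h0, zero_mul, Matrix.det_one] at this
  exact zero_ne_one this

lemma adj_rel (hW : W ∈ Matrix.unitaryGroup (Fin 2) ℂ) :
    Matrix.adjugate W = W.det • Wᴴ := by
  have h1 : Wᴴ * W = 1 := by
    simpa [Matrix.star_eq_conjTranspose] using (Matrix.mem_unitaryGroup_iff'.mp hW)
  have h := Matrix.mul_adjugate W
  calc Matrix.adjugate W = (Wᴴ * W) * Matrix.adjugate W := by rw [h1, Matrix.one_mul]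
    _ = Wᴴ * (W * Matrix.adjugate W) := by rw [Matrix.mul_assoc]
    _ = Wᴴ * (W.det • (1 : M2')) := by rw [h]
    _ = W.det • Wᴴ := by rw [Matrix.mul_smul, Matrix.mul_one]

lemma adj_entries (hW : W ∈ Matrix.unitaryGroup (Fin 2) ℂ) :
    -W 1 0 = W.det * star (W 0 1) ∧ W 0 0 = W.det * star (W 1 1) := by
  have h := adj_rel W hW
  rw [Matrix.adjugate_fin_two] at h
  constructor
  · have := congrFun (congrFun h 1) 0
    simpa [Matrix.conjTranspose_apply] using this
  · have := congrFun (congrFun h 1) 1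
    simpa [Matrix.conjTranspose_apply] using this

lemma wd_transfer (hW : W ∈ Matrix.unitaryGroup (Fin 2) ℂ) (h0 : Wd W 0 ≠ 0) :
    Wd W 1 ≠ 0 := by
  obtain ⟨e10, e11⟩ := adj_entries W hW
  have hd := det_ne_zero' W hW
  intro h1
  apply h0
  have hs : star (Wd W 1) = 0 := by rw [h1, star_zero]
  rw [Wd] at hs ⊢
  have key : W.det ^ 2 * star (W 0 1 ^ 2 - W 1 1 ^ 2) = W 1 0 ^ 2 - W 0 0 ^ 2 := by
    have a1 : W.det * star (W 0 1) = -W 1 0 := e10.symm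
    have a2 : W.det * star (W 1 1) = W 0 0 := e11.symm
    calc W.det ^ 2 * star (W 0 1 ^ 2 - W 1 1 ^ 2)
        = (W.det * star (W 0 1)) ^ 2 - (W.det * star (W 1 1)) ^ 2 := by
          simp [star_sub, mul_pow]; ring
      _ = W 1 0 ^ 2 - W 0 0 ^ 2 := by rw [a1, a2]; ring
  rw [hs, mul_zero] at key
  have := key.symm
  linear_combination -this

lemma eigen_cases (hW : W ∈ Matrix.unitaryGroup (Fin 2) ℂ) (h : Wd W 0 = 0) :
    (W 1 0 = W 0 0 ∧ W 1 1 = -W 0 1) ∨ (W 1 0 = -W 0 0 ∧ W 1 1 = W 0 1) := by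
  obtain ⟨e10, e11⟩ := adj_entries W hW
  have hd := det_ne_zero' W hW
  rw [Wd] at h
  have hfac : (W 0 0 - W 1 0) * (W 0 0 + W 1 0) = 0 := by linear_combination h
  rcases mul_eq_zero.mp hfac with hc | hc
  · left
    have h10 : W 1 0 = W 0 0 := by linear_combination -hc
    refine ⟨h10, ?_⟩
    have hz : W.det * (star (W 0 1) + star (W 1 1)) = 0 := by
      rw [mul_add, ← e10, ← e11, h10]; ring
    have hsum : star (W 0 1 + W 1 1) = 0 := by
      rw [star_add]
      exact (mul_eq_zero.mp hz).resolve_left hd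
    have hfin : W 0 1 + W 1 1 = 0 := by
      have := congrArg star hsum; simpa using this
    linear_combination hfin
  · right
    have h10 : W 1 0 = -W 0 0 := by linear_combination hc
    refine ⟨h10, ?_⟩
    have hz : W.det * (star (W 0 1) - star (W 1 1)) = 0 := by
      rw [mul_sub, ← e10, ← e11, h10]; ring
    have hsum : star (W 0 1 - W 1 1) = 0 := by
      rw [star_sub]
      exact (mul_eq_zero.mp hz).resolve_left hd
    have hfin : W 0 1 - W 1 1 = 0 := by
      have := congrArg star hsum; simpa using this
    linear_combination -hfin

lemma Brel (ε : ℂ) (hε : ε ^ 2 = 1) (h1 : W 1 0 = ε * W 0 0) (h2 : W 1 1 = -(ε * W 0 1))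
    (b : Fin 2) :
    Bmat W₁ W W₂ 1 b = (![ε, -ε] b) • Bmat W₁ W W₂ 0 b := by
  have key : σ1 * (W * sbM b) = (![ε, -ε] b) • (W * sbM b) := by
    ext i j
    fin_cases b <;> fin_cases i <;> fin_cases j <;>
      · simp only [Fin.mk_zero, Fin.mk_one, sbM, σ1, S0, S3, Matrix.cons_val_zero,
          Matrix.cons_val_one, Matrix.head_cons, Matrix.mul_apply, Fin.sum_univ_two,
          Matrix.smul_apply, Matrix.cons_val', Matrix.empty_val', Matrix.cons_val_fin_one,
          Matrix.head_fin_const, smul_eq_mul]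
        (try norm_num) <;>
        first
        | rfl
        | exact h1
        | exact h2
        | ring1
        | linear_combination h1
        | linear_combination -h1
        | linear_combination h2
        | linear_combination -h2
        | linear_combination -(ε * h1) - W 0 0 * hε
        | linear_combination (ε * h1) + W 0 0 * hε
        | linear_combination -(ε * h2) + W 0 1 * hε
        | linear_combination -(ε * h2) - W 0 1 * hε
        | linear_combination (ε * h2) + W 0 1 * hε
        | linear_combination (ε * h2) - W 0 1 * hε
  have hB : Bmat W₁ W W₂ 1 b = W₁ * (σ1 * (W * sbM b)) * W₂ := by
    rw [Bmat]
    simp only [pw, Matrix.cons_val_one, Matrix.cons_val_zero, Matrix.head_cons, Matrix.mul_assoc]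
  rw [hB, key]
  rw [Bmat]
  simp only [pw, Matrix.cons_val_zero, Matrix.mul_one, Matrix.smul_mul, Matrix.mul_smul,
    Matrix.mul_assoc]

end unitaryFacts

lemma sum_mul_smul (f M : M2') (c : ℂ) :
    ∑ i : Fin 2, ∑ j : Fin 2, f i j * (c • M) i j =
      c * ∑ i : Fin 2, ∑ j : Fin 2, f i j * M i j := by
  simp only [Matrix.smul_apply, smul_eq_mul, Fin.sum_univ_two]
  ring

lemma sum_smul_mul (f M : M2') (c : ℂ) :
    ∑ i : Fin 2, ∑ j : Fin 2, (c • f) i j * M i j =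
      c * ∑ i : Fin 2, ∑ j : Fin 2, f i j * M i j := by
  simp only [Matrix.smul_apply, smul_eq_mul, Fin.sum_univ_two]
  ring

theorem stmt14 (V W X V₁ W₁ X₁ V₂ W₂ X₂ : Matrix (Fin 2) (Fin 2) ℂ)
    (hV : V ∈ Matrix.unitaryGroup (Fin 2) ℂ) (hW : W ∈ Matrix.unitaryGroup (Fin 2) ℂ)
    (hX : X ∈ Matrix.unitaryGroup (Fin 2) ℂ)
    (hV₁ : V₁ ∈ Matrix.unitaryGroup (Fin 2) ℂ) (hW₁ : W₁ ∈ Matrix.unitaryGroup (Fin 2) ℂ)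
    (hX₁ : X₁ ∈ Matrix.unitaryGroup (Fin 2) ℂ)
    (hV₂ : V₂ ∈ Matrix.unitaryGroup (Fin 2) ℂ) (hW₂ : W₂ ∈ Matrix.unitaryGroup (Fin 2) ℂ)
    (hX₂ : X₂ ∈ Matrix.unitaryGroup (Fin 2) ℂ)
    (M₁ : Matrix (Fin 2 × Fin 2 × Fin 2) (Fin 2 × Fin 2 × Fin 2) ℂ)
    (hM₁ : M₁ = (V₁ ⊗ₖ (W₁ ⊗ₖ X₁)) * matAssoc (Tcnot ⊗ₖ I2) * (V ⊗ₖ (W ⊗ₖ X)) *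
      (I2 ⊗ₖ Tcnot) * (V₂ ⊗ₖ (W₂ ⊗ₖ X₂))) :
    M₁ ∈ Matrix.unitaryGroup (Fin 2 × Fin 2 × Fin 2) ℂ ∧
      (sr M₁ = 1 ∨ sr M₁ = 2 ∨ sr M₁ = 4) := by
  have hI2 : I2 ∈ Matrix.unitaryGroup (Fin 2) ℂ := by
    rw [show I2 = (1 : M2') from rfl]; exact one_mem _
  constructor
  · rw [hM₁]
    exact mul_mem (mul_mem (mul_mem (mul_mem
      (kron_unitary _ _ hV₁ (kron_unitary _ _ hW₁ hX₁))
      (matAssoc_unitary _ (kron_unitary _ _ Tcnot_unitary hI2)))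
      (kron_unitary _ _ hV (kron_unitary _ _ hW hX)))
      (kron_unitary _ _ hI2 Tcnot_unitary))
      (kron_unitary _ _ hV₂ (kron_unitary _ _ hW₂ hX₂))
  · have hexp := expandM V W X V₁ W₁ X₁ V₂ W₂ X₂ M₁ hM₁
    set S := {r | ∃ A B C : Fin r → Matrix (Fin 2) (Fin 2) ℂ,
      M₁ = ∑ j, A j ⊗ₖ (B j ⊗ₖ C j)} with hS
    have h4mem : 4 ∈ S := by
      refine ⟨![Amat V₁ V V₂ 0, Amat V₁ V V₂ 0, Amat V₁ V V₂ 1, Amat V₁ V V₂ 1],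
        ![Bmat W₁ W W₂ 0 0, Bmat W₁ W W₂ 0 1, Bmat W₁ W W₂ 1 0, Bmat W₁ W W₂ 1 1],
        ![Cmat X₁ X X₂ 0, Cmat X₁ X X₂ 1, Cmat X₁ X X₂ 0, Cmat X₁ X X₂ 1], ?_⟩
      rw [Fin.sum_univ_four]
      simpa using hexp
    have hub4 : sr M₁ ≤ 4 := Nat.sInf_le h4mem
    obtain ⟨A', B', C', hdec⟩ := Nat.sInf_mem (⟨4, h4mem⟩ : S.Nonempty)
    by_cases hd0 : Wd W 0 = 0
    · -- Schmidt rank 2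
      have hepsilon : ∃ ε : ℂ, ε ^ 2 = 1 ∧ W 1 0 = ε * W 0 0 ∧ W 1 1 = -(ε * W 0 1) := by
        rcases eigen_cases W hW hd0 with ⟨ha, hb⟩ | ⟨ha, hb⟩
        · exact ⟨1, by norm_num, by simpa using ha, by simpa using hb⟩
        · exact ⟨-1, by norm_num, by simpa using ha, by simpa using hb⟩
      obtain ⟨ε, hε, he1, he2⟩ := hepsilon
      have hBrel := Brel W₁ W W₂ ε hε he1 he2
      have h2mem : 2 ∈ S := by
        refine ⟨![Amat V₁ V V₂ 0 + ε • Amat V₁ V V₂ 1, Amat V₁ V V₂ 0 + (-ε) • Amat V₁ V V₂ 1],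
          ![Bmat W₁ W W₂ 0 0, Bmat W₁ W W₂ 0 1],
          ![Cmat X₁ X X₂ 0, Cmat X₁ X X₂ 1], ?_⟩
        rw [Fin.sum_univ_two]
        simp only [Matrix.cons_val_zero, Matrix.cons_val_one, Matrix.head_cons]
        rw [hexp, hBrel 0, hBrel 1]
        simp only [Matrix.cons_val_zero, Matrix.cons_val_one, Matrix.head_cons,
          Matrix.add_kronecker, Matrix.smul_kronecker, Matrix.kronecker_smul]
        abel
      have hub2 : sr M₁ ≤ 2 := Nat.sInf_le h2mem
      have hlb2 : 2 ≤ sr M₁ := by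
        have hL : Lmap (fun p : Fin 2 => dualB2 W₁ W W₂ p)
            (fun q : Fin 2 => dualA V₁ V V₂ q)
            (fun q : Fin 2 => (![1, -ε] q) • dualC X₁ X X₂ q) M₁ = 1 := by
          have hexp2 : M₁ =
              Amat V₁ V V₂ 0 ⊗ₖ (Bmat W₁ W W₂ 0 0 ⊗ₖ Cmat X₁ X X₂ 0)
            + Amat V₁ V V₂ 0 ⊗ₖ (Bmat W₁ W W₂ 0 1 ⊗ₖ Cmat X₁ X X₂ 1)
            + Amat V₁ V V₂ 1 ⊗ₖ ((ε • Bmat W₁ W W₂ 0 0) ⊗ₖ Cmat X₁ X X₂ 0)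
            + Amat V₁ V V₂ 1 ⊗ₖ (((-ε) • Bmat W₁ W W₂ 0 1) ⊗ₖ Cmat X₁ X X₂ 1) := by
            rw [hexp, hBrel 0, hBrel 1]
            simp only [Matrix.cons_val_zero, Matrix.cons_val_one, Matrix.head_cons]
          ext p q
          rw [hexp2, Lmap_add, Lmap_add, Lmap_add]
          simp only [Matrix.add_apply, Lmap_pure]
          simp only [sum_mul_smul, sum_smul_mul]
          simp only [evalB2 W₁ W W₂ hW₁ hW hW₂, evalA V₁ V V₂ hV hV₁ hV₂,
            evalC X₁ X X₂ hX hX₁ hX₂]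
          fin_cases p <;> fin_cases q <;>
            · simp [Matrix.one_apply]
              try linear_combination hε
        have := le_of_Lmap_eq_one _ _ _ A' B' C' (by rw [← hdec]; exact hL)
        simp at this; exact this
      refine Or.inr (Or.inl ?_)
      omega
    · -- Schmidt rank 4
      have hd1 := wd_transfer W hW hd0
      have hlb4 : 4 ≤ sr M₁ := by
        have hL : Lmap (fun p : Fin 2 × Fin 2 => dualB4 W₁ W W₂ p)
            (fun q : Fin 2 × Fin 2 => dualA V₁ V V₂ q.1)
            (fun q : Fin 2 × Fin 2 => dualC X₁ X X₂ q.2) M₁ = 1 := by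
          ext p q
          rw [hexp, Lmap_add, Lmap_add, Lmap_add]
          simp only [Matrix.add_apply, Lmap_pure]
          simp only [evalB4 W₁ W W₂ hW₁ hW₂ hd0 hd1, evalA V₁ V V₂ hV hV₁ hV₂,
            evalC X₁ X X₂ hX hX₁ hX₂]
          obtain ⟨p1, p2⟩ := p
          obtain ⟨q1, q2⟩ := q
          fin_cases p1 <;> fin_cases p2 <;> fin_cases q1 <;> fin_cases q2 <;>
            norm_num [Matrix.one_apply, Prod.ext_iff]
        have := le_of_Lmap_eq_one _ _ _ A' B' C' (by rw [← hdec]; exact hL)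
        simp at this; exact this
      refine Or.inr (Or.inr ?_)
      omega
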